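/- Let X = l_1², i.e., ℝ² with the norm ‖(a,b)‖ = |a| + |b|, and let T be the linear operator on X defined by T(1,0) = (1/2, 1/2) and T(0,1) = (0,0). Then T is a nonzero left symmetric point of the space of continuous linear operators on X with the operator norm: for every continuous linear operator A on X, T ⊥_B A implies A ⊥_B T. -/

import Mathlib

/-- Birkhoff-James orthogonality: `x ⊥_B y` iff `‖x + λ y‖ ≥ ‖x‖` for all real `λ`. -/
def BJOrth {X : Type*} [NormedAddCommGroup X] [NormedSpace ℝ X] (x y : X) : Prop :=
  ∀ l : ℝ, ‖x‖ ≤ ‖x + l • y‖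

/-- `ℝ²` with the `ℓ₁` norm. -/
abbrev L1Two : Type := PiLp 1 (fun _ : Fin 2 => ℝ)

/-- Inclusion of a pair of reals into `ℓ₁²`. -/
def v1 (a b : ℝ) : L1Two := (WithLp.equiv 1 (Fin 2 → ℝ)).symm ![a, b]

set_option maxHeartbeats 1000000

lemma norm_v1 (a b : ℝ) : ‖v1 a b‖ = |a| + |b| := by
  rw [PiLp.norm_eq_sum (by norm_num)]
  simp [Fin.sum_univ_two, v1]

lemma decomp (x : L1Two) : x = x 0 • v1 1 0 + x 1 • v1 0 1 := by
  ext i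
  fin_cases i <;> simp [v1]

lemma v1_add (a b c d : ℝ) : v1 a b + v1 c d = v1 (a+c) (b+d) := by
  ext i; fin_cases i <;> simp [v1]

lemma v1_smul (l a b : ℝ) : l • v1 a b = v1 (l*a) (l*b) := by
  ext i; fin_cases i <;> simp [v1]

lemma opNorm_le (S : L1Two →L[ℝ] L1Two) :
    ‖S‖ ≤ max ‖S (v1 1 0)‖ ‖S (v1 0 1)‖ := by
  apply ContinuousLinearMap.opNorm_le_bound
  · positivity
  intro x
  have hx : x = x 0 • v1 1 0 + x 1 • v1 0 1 := decomp x
  calc ‖S x‖ = ‖x 0 • S (v1 1 0) + x 1 • S (v1 0 1)‖ := by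
        conv_lhs => rw [hx, map_add, map_smul, map_smul]
    _ ≤ |x 0| * ‖S (v1 1 0)‖ + |x 1| * ‖S (v1 0 1)‖ := by
        refine (norm_add_le _ _).trans ?_
        simp [norm_smul]
    _ ≤ |x 0| * max ‖S (v1 1 0)‖ ‖S (v1 0 1)‖ + |x 1| * max ‖S (v1 1 0)‖ ‖S (v1 0 1)‖ := by
        gcongr
        · exact le_max_left _ _
        · exact le_max_right _ _
    _ = max ‖S (v1 1 0)‖ ‖S (v1 0 1)‖ * (|x 0| + |x 1|) := by ring
    _ = max ‖S (v1 1 0)‖ ‖S (v1 0 1)‖ * ‖x‖ := by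
        congr 1
        rw [show x = v1 (x 0) (x 1) by ext i; fin_cases i <;> simp [v1], norm_v1]
        simp [v1]

lemma col_le_opNorm (S : L1Two →L[ℝ] L1Two) (a b : ℝ) (h : |a| + |b| = 1) :
    ‖S (v1 a b)‖ ≤ ‖S‖ := by
  have := S.le_opNorm (v1 a b)
  rwa [norm_v1, h, mul_one] at this

theorem l1_nonzero_leftSym_operator (T : L1Two →L[ℝ] L1Two)
    (hT1 : T (v1 1 0) = v1 (1/2) (1/2)) (hT2 : T (v1 0 1) = 0) :
    T ≠ 0 ∧ ∀ A : L1Two →L[ℝ] L1Two, BJOrth T A → BJOrth A T := by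
  constructor
  · intro h
    rw [h] at hT1
    simp at hT1
    have := congrArg (fun x : L1Two => x 0) hT1.symm
    simp [v1] at this
  · intro A hBJ
    set a : ℝ := A (v1 1 0) 0 with ha
    set b : ℝ := A (v1 1 0) 1 with hb
    set c : ℝ := A (v1 0 1) 0 with hc
    set d : ℝ := A (v1 0 1) 1 with hd
    have hA1 : A (v1 1 0) = v1 a b := by ext i; fin_cases i <;> rfl
    have hA2 : A (v1 0 1) = v1 c d := by ext i; fin_cases i <;> rfl
    -- key fact: a + b = 0
    have hsum : a + b = 0 := by
      by_contra hs
      set s : ℝ := a + b with hsdef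
      set K : ℝ := |a| + |b| + |c| + |d| + 1 with hK
      have na := abs_nonneg a
      have nb := abs_nonneg b
      have nc := abs_nonneg c
      have nd := abs_nonneg d
      have hK1 : 1 ≤ K := by simp only [hK]; linarith
      have hsK : |s| ≤ K - 1 := by
        have := abs_add_le a b
        simp only [hK, hsdef]; linarith
      have haK : |a| ≤ K - 1 := by simp only [hK]; linarith
      have hbK : |b| ≤ K - 1 := by simp only [hK]; linarith
      have hcdK : |c| + |d| ≤ K - 1 := by simp only [hK]; linarith
      set δ : ℝ := 1/(2*K^2) with hδdef
      have hδ : 0 < δ := by positivity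
      set l : ℝ := -s * δ with hldef
      have habs_l : |l| ≤ (K-1) * δ := by
        rw [hldef, abs_mul, abs_neg, abs_of_pos hδ]
        gcongr
      have key : (K-1) * δ * (K-1) < 1/2 := by
        have h2 : (K-1)^2 < K^2 := by nlinarith
        have h3 : (K-1)*δ*(K-1) = (K-1)^2 / (2*K^2) := by rw [hδdef]; ring
        rw [h3, div_lt_iff₀ (by positivity)]
        nlinarith
      have hla : |l * a| < 1/2 := by
        rw [abs_mul]
        calc |l| * |a| ≤ (K-1)*δ * (K-1) :=
              mul_le_mul habs_l haK (abs_nonneg a) (mul_nonneg (by linarith) hδ.le)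
          _ < 1/2 := key
      have hlb : |l * b| < 1/2 := by
        rw [abs_mul]
        calc |l| * |b| ≤ (K-1)*δ * (K-1) :=
              mul_le_mul habs_l hbK (abs_nonneg b) (mul_nonneg (by linarith) hδ.le)
          _ < 1/2 := key
      have hg : |l * c| + |l * d| < 1 := by
        rw [abs_mul l c, abs_mul l d, ← mul_add]
        calc |l| * (|c| + |d|) ≤ (K-1)*δ * (K-1) :=
              mul_le_mul habs_l hcdK (by linarith) (mul_nonneg (by linarith) hδ.le)
          _ < 1/2 := key
          _ < 1 := by norm_num
      have hTnorm : (1:ℝ) ≤ ‖T‖ := by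
        have h6 := col_le_opNorm T 1 0 (by norm_num)
        rw [hT1, norm_v1] at h6
        have habs : |(1/2:ℝ)| = 1/2 := by norm_num
        rw [habs] at h6
        linarith
      have c1 : (T + l • A) (v1 1 0) = v1 (1/2 + l*a) (1/2 + l*b) := by
        simp [hT1, hA1, v1_smul, v1_add]
      have c2 : (T + l • A) (v1 0 1) = v1 (l*c) (l*d) := by
        simp [hT2, hA2, v1_smul]
      have hup := opNorm_le (T + l • A)
      rw [c1, c2, norm_v1, norm_v1] at hup
      have hla' := abs_lt.mp hla
      have hlb' := abs_lt.mp hlb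
      have hf : |1/2 + l*a| + |1/2 + l*b| < 1 := by
        rw [abs_of_pos (by linarith), abs_of_pos (by linarith)]
        have hls : l * a + l * b = -(s^2 * δ) := by rw [hldef, hsdef]; ring
        have hs2 : 0 < s^2 := by positivity
        nlinarith
      have hfinal : (1:ℝ) < 1 :=
        lt_of_le_of_lt (hTnorm.trans ((hBJ l).trans hup)) (max_lt hf hg)
      exact absurd hfinal (lt_irrefl 1)
    -- Part 2
    intro μ
    have h1 : ‖A‖ ≤ max (|a| + |b|) (|c| + |d|) := by
      have := opNorm_le A
      rwa [hA1, hA2, norm_v1, norm_v1] at this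
    have hb' : b = -a := by linarith
    have hcol1 : (A + μ • T) (v1 1 0) = v1 (a + μ * (1/2)) (b + μ * (1/2)) := by
      simp [hA1, hT1, v1_smul, v1_add]
    have hcol2 : (A + μ • T) (v1 0 1) = v1 c d := by
      simp [hA2, hT2]
    have hge1 : |a| + |b| ≤ ‖A + μ • T‖ := by
      have h2 : ‖(A + μ • T) (v1 1 0)‖ ≤ ‖A + μ • T‖ :=
        col_le_opNorm _ _ _ (by norm_num)
      rw [hcol1, norm_v1] at h2
      have h3 : |(a + μ * (1/2)) - (b + μ * (1/2))| ≤ |a + μ * (1/2)| + |b + μ * (1/2)| :=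
        abs_sub _ _
      have h4 : |a| + |b| ≤ |(a + μ * (1/2)) - (b + μ * (1/2))| := by
        rw [hb']
        rw [show (a + μ * (1/2)) - (-a + μ * (1/2)) = 2*a by ring]
        rw [abs_neg, abs_mul]
        simp [abs_two]; linarith [abs_nonneg a]
      linarith
    have hge2 : |c| + |d| ≤ ‖A + μ • T‖ := by
      have h2 : ‖(A + μ • T) (v1 0 1)‖ ≤ ‖A + μ • T‖ :=
        col_le_opNorm _ _ _ (by norm_num)
      rwa [hcol2, norm_v1] at h2
    exact h1.trans (max_le hge1 hge2)
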